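/- Let ℓ be an ordered special length vector of type {1, n−2, n−1}. Then there are at most three possibilities for the chamber of ℓ up to permutation, distinguished by which of {n−1,n} and {n−2,n} are short; moreover {1, n−2, n} is long with respect to ℓ, so if {n−2,n} is short then {j,n−2,n} is long for all j ≥ 1. -/

import Mathlib

open Finset

/-- The sum of `ℓ` over `J` is less than the sum over the complement in `{1,…,n}`. -/
def Short (n : ℕ) (ℓ : ℕ → ℝ) (J : Finset ℕ) : Prop :=
  ∑ j ∈ J, ℓ j < ∑ j ∈ Finset.Icc 1 n \ J, ℓ j

/-- `J` is long iff its complement in `{1,…,n}` is short. -/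
def Long (n : ℕ) (ℓ : ℕ → ℝ) (J : Finset ℕ) : Prop :=
  Short n ℓ (Finset.Icc 1 n \ J)

/-- All entries positive. -/
def LengthVec (n : ℕ) (ℓ : ℕ → ℝ) : Prop := ∀ i ∈ Finset.Icc 1 n, 0 < ℓ i

/-- `ℓ₁ ≤ … ≤ ℓₙ`. -/
def OrderedVec (n : ℕ) (ℓ : ℕ → ℝ) : Prop :=
  ∀ i j : ℕ, 1 ≤ i → i ≤ j → j ≤ n → ℓ i ≤ ℓ j

/-- No subset has sum equal to the sum of its complement. -/
def Generic (n : ℕ) (ℓ : ℕ → ℝ) : Prop :=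
  ∀ J ⊆ Finset.Icc 1 n, ∑ j ∈ J, ℓ j ≠ ∑ j ∈ Finset.Icc 1 n \ J, ℓ j

/-- Dominance order: an injective order-preserving map `φ : J₁ → J₂` with `x ≤ φ x`. -/
def DomLe (J₁ J₂ : Finset ℕ) : Prop :=
  ∃ φ : ℕ → ℕ, Set.InjOn φ ↑J₁ ∧ (∀ x ∈ J₁, φ x ∈ J₂) ∧
    (∀ x ∈ J₁, ∀ y ∈ J₁, x < y → φ x < φ y) ∧ ∀ x ∈ J₁, x ≤ φ x

/-- `Ṡ_k(ℓ)`: subsets `J ⊆ {1,…,n−1}` of cardinality `k` with `J ∪ {n}` short. -/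
def SdotSet (n : ℕ) (ℓ : ℕ → ℝ) (k : ℕ) : Set (Finset ℕ) :=
  {J | J ⊆ Finset.Icc 1 (n-1) ∧ J.card = k ∧ Short n ℓ (insert n J)}

/-- `Ṡ(ℓ)`: subsets `J ⊆ {1,…,n−1}` with `J ∪ {n}` short. -/
def Sdot (n : ℕ) (ℓ : ℕ → ℝ) : Set (Finset ℕ) :=
  {J | J ⊆ Finset.Icc 1 (n-1) ∧ Short n ℓ (insert n J)}

/-- Special: `Ṡ_{n−3}(ℓ) = ∅ ≠ Ṡ_{n−4}(ℓ)`. -/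
def SpecialVec (n : ℕ) (ℓ : ℕ → ℝ) : Prop :=
  SdotSet n ℓ (n-3) = ∅ ∧ SdotSet n ℓ (n-4) ≠ ∅

/-- `T` is the type of `ℓ`: the minimal three-element long subset of `{1,…,n−1}`. -/
def IsType (n : ℕ) (ℓ : ℕ → ℝ) (T : Finset ℕ) : Prop :=
  T ⊆ Finset.Icc 1 (n-1) ∧ T.card = 3 ∧ Long n ℓ T ∧
    ∀ T' ⊆ Finset.Icc 1 (n-1), T'.card = 3 → Long n ℓ T' → DomLe T T'

section Helpers

variable (n : ℕ) (ℓ : ℕ → ℝ)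

lemma short_iff' {J : Finset ℕ} (hJ : J ⊆ Finset.Icc 1 n) :
    Short n ℓ J ↔ 2 * ∑ j ∈ J, ℓ j < ∑ j ∈ Finset.Icc 1 n, ℓ j := by
  unfold Short
  rw [Finset.sum_sdiff_eq_sub hJ]
  constructor <;> intro h <;> linarith

lemma long_iff' {J : Finset ℕ} (hJ : J ⊆ Finset.Icc 1 n) :
    Long n ℓ J ↔ ∑ j ∈ Finset.Icc 1 n, ℓ j < 2 * ∑ j ∈ J, ℓ j := by
  unfold Long
  rw [short_iff' n ℓ Finset.sdiff_subset, Finset.sum_sdiff_eq_sub hJ]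
  constructor <;> intro h <;> linarith

lemma short_mono (hpos : LengthVec n ℓ) {K K' : Finset ℕ}
    (hK : K ⊆ Finset.Icc 1 n) (h' : K' ⊆ K) (h : Short n ℓ K) : Short n ℓ K' := by
  rw [short_iff' n ℓ hK] at h
  rw [short_iff' n ℓ (h'.trans hK)]
  have : ∑ j ∈ K', ℓ j ≤ ∑ j ∈ K, ℓ j :=
    Finset.sum_le_sum_of_subset_of_nonneg h' (fun i hi _ => (hpos i (hK hi)).le)
  linarith

lemma not_short_and_long {K : Finset ℕ} (hK : K ⊆ Finset.Icc 1 n)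
    (h1 : Short n ℓ K) (h2 : Long n ℓ K) : False := by
  rw [short_iff' n ℓ hK] at h1
  rw [long_iff' n ℓ hK] at h2
  linarith

lemma sum_triple {a b c : ℕ} (hab : a ≠ b) (hac : a ≠ c) (hbc : b ≠ c) :
    ∑ j ∈ ({a, b, c} : Finset ℕ), ℓ j = ℓ a + ℓ b + ℓ c := by
  rw [Finset.sum_insert (by simp [hab, hac]), Finset.sum_insert (by simp [hbc]),
    Finset.sum_singleton]
  ring

lemma triple_subset_Icc {a b c : ℕ} (ha : 1 ≤ a) (han : a ≤ n) (hb : 1 ≤ b) (hbn : b ≤ n)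
    (hc : 1 ≤ c) (hcn : c ≤ n) : ({a, b, c} : Finset ℕ) ⊆ Finset.Icc 1 n := by
  simp only [Finset.insert_subset_iff, Finset.singleton_subset_iff, Finset.mem_Icc]
  omega

lemma long_triple_ge (hn : 5 ≤ n) (hord : OrderedVec n ℓ)
    (hLT : Long n ℓ {1, n-2, n-1}) {a b c : ℕ}
    (ha : 1 ≤ a) (hb : n-2 ≤ b) (hc : n-1 ≤ c) (hcn : c ≤ n)
    (hab : a < b) (hbc : b < c) :
    Long n ℓ {a, b, c} := by
  rw [long_iff' n ℓ (triple_subset_Icc n (by omega) (by omega) (by omega) (by omega)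
    (by omega) (by omega)),
    sum_triple ℓ (by omega) (by omega) (by omega)]
  rw [long_iff' n ℓ (triple_subset_Icc n (by omega) (by omega) (by omega) (by omega)
    (by omega) (by omega)), sum_triple ℓ (by omega) (by omega) (by omega)] at hLT
  have h1 : ℓ 1 ≤ ℓ a := hord 1 a le_rfl ha (by omega)
  have h2 : ℓ (n-2) ≤ ℓ b := hord (n-2) b (by omega) hb (by omega)
  have h3 : ℓ (n-1) ≤ ℓ c := hord (n-1) c (by omega) hc hcn
  linarith

lemma sdot_char (hn : 5 ≤ n) (hpos : LengthVec n ℓ) (hord : OrderedVec n ℓ)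
    (hS13 : SdotSet n ℓ (n-3) = ∅) (hLT : Long n ℓ {1, n-2, n-1}) (J : Finset ℕ) :
    J ∈ Sdot n ℓ ↔ ((J ⊆ Finset.Icc 1 (n-3) ∧ J ≠ Finset.Icc 1 (n-3)) ∨
      (J = {n-2} ∧ Short n ℓ {n-2, n}) ∨ (J = {n-1} ∧ Short n ℓ {n-1, n})) := by
  simp only [Sdot, Set.mem_setOf_eq]
  have hIccn : Finset.Icc 1 (n-1) ⊆ Finset.Icc 1 n := Finset.Icc_subset_Icc_right (by omega)
  constructor
  · rintro ⟨hJsub, hJshort⟩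
    have hinsub : insert n J ⊆ Finset.Icc 1 n := by
      rw [Finset.insert_subset_iff]
      exact ⟨Finset.mem_Icc.mpr ⟨by omega, le_rfl⟩, hJsub.trans hIccn⟩
    by_cases h1 : n - 1 ∈ J
    · by_cases h2 : n - 2 ∈ J
      · exfalso
        have hsub3 : ({n-2, n-1, n} : Finset ℕ) ⊆ insert n J := by
          rw [Finset.insert_subset_iff, Finset.insert_subset_iff,
            Finset.singleton_subset_iff]
          exact ⟨Finset.mem_insert_of_mem h2, Finset.mem_insert_of_mem h1,
            Finset.mem_insert_self n J⟩
        exact not_short_and_long n ℓ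
          (triple_subset_Icc n (by omega) (by omega) (by omega) (by omega) (by omega)
            (by omega))
          (short_mono n ℓ hpos hinsub hsub3 hJshort)
          (long_triple_ge n ℓ hn hord hLT (by omega) (by omega) (by omega) (by omega)
            (by omega) (by omega))
      · right; right
        have key : ∀ a ∈ J, a = n - 1 := by
          intro a ha
          by_contra hne
          have ha' := Finset.mem_Icc.mp (hJsub ha)
          have hane2 : a ≠ n - 2 := fun h => h2 (h ▸ ha)
          have ha3 : 1 ≤ a ∧ a ≤ n - 3 := by omega
          have hsub3 : ({a, n-1, n} : Finset ℕ) ⊆ insert n J := by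
            rw [Finset.insert_subset_iff, Finset.insert_subset_iff,
              Finset.singleton_subset_iff]
            exact ⟨Finset.mem_insert_of_mem ha, Finset.mem_insert_of_mem h1,
              Finset.mem_insert_self n J⟩
          exact not_short_and_long n ℓ
            (triple_subset_Icc n (by omega) (by omega) (by omega) (by omega) (by omega)
              (by omega))
            (short_mono n ℓ hpos hinsub hsub3 hJshort)
            (long_triple_ge n ℓ hn hord hLT (by omega) (by omega) (by omega) (by omega)
              (by omega) (by omega))
        have hJeq : J = {n-1} := Finset.eq_singleton_iff_unique_mem.mpr ⟨h1, key⟩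
        refine ⟨hJeq, ?_⟩
        rw [Finset.pair_comm]
        rw [hJeq] at hJshort
        exact hJshort
    · by_cases h2 : n - 2 ∈ J
      · right; left
        have key : ∀ a ∈ J, a = n - 2 := by
          intro a ha
          by_contra hne
          have ha' := Finset.mem_Icc.mp (hJsub ha)
          have hane1 : a ≠ n - 1 := fun h => h1 (h ▸ ha)
          have ha3 : 1 ≤ a ∧ a ≤ n - 3 := by omega
          have hsub3 : ({a, n-2, n} : Finset ℕ) ⊆ insert n J := by
            rw [Finset.insert_subset_iff, Finset.insert_subset_iff,
              Finset.singleton_subset_iff]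
            exact ⟨Finset.mem_insert_of_mem ha, Finset.mem_insert_of_mem h2,
              Finset.mem_insert_self n J⟩
          exact not_short_and_long n ℓ
            (triple_subset_Icc n (by omega) (by omega) (by omega) (by omega) (by omega)
              (by omega))
            (short_mono n ℓ hpos hinsub hsub3 hJshort)
            (long_triple_ge n ℓ hn hord hLT (by omega) (by omega) (by omega) (by omega)
              (by omega) (by omega))
        have hJeq : J = {n-2} := Finset.eq_singleton_iff_unique_mem.mpr ⟨h2, key⟩
        refine ⟨hJeq, ?_⟩
        rw [Finset.pair_comm]
        rw [hJeq] at hJshort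
        exact hJshort
      · left
        have hsub : J ⊆ Finset.Icc 1 (n-3) := by
          intro a ha
          have ha' := Finset.mem_Icc.mp (hJsub ha)
          have hane1 : a ≠ n - 1 := fun h => h1 (h ▸ ha)
          have hane2 : a ≠ n - 2 := fun h => h2 (h ▸ ha)
          exact Finset.mem_Icc.mpr (by omega)
        refine ⟨hsub, ?_⟩
        intro hJeq
        have hmem : J ∈ SdotSet n ℓ (n-3) := by
          refine ⟨hJsub, ?_, hJshort⟩
          rw [hJeq, Nat.card_Icc]
          omega
        rw [hS13] at hmem
        exact hmem
  · rintro (⟨hsub, hne⟩ | ⟨rfl, hs⟩ | ⟨rfl, hs⟩)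
    · have hsub' : J ⊆ Finset.Icc 1 (n-1) :=
        hsub.trans (Finset.Icc_subset_Icc_right (by omega))
      refine ⟨hsub', ?_⟩
      obtain ⟨a, haI, haJ⟩ :=
        Finset.exists_of_ssubset (Finset.ssubset_iff_subset_ne.mpr ⟨hsub, hne⟩)
      have ha' := Finset.mem_Icc.mp haI
      have hlong : Long n ℓ {a, n-2, n-1} :=
        long_triple_ge n ℓ hn hord hLT (by omega) (by omega) (by omega) (by omega)
          (by omega) (by omega)
      unfold Long at hlong
      refine short_mono n ℓ hpos Finset.sdiff_subset ?_ hlong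
      intro x hx
      rw [Finset.mem_insert] at hx
      rw [Finset.mem_sdiff, Finset.mem_Icc]
      rcases hx with rfl | hx
      · refine ⟨⟨by omega, le_rfl⟩, ?_⟩
        simp only [Finset.mem_insert, Finset.mem_singleton]
        omega
      · have hx' := Finset.mem_Icc.mp (hsub hx)
        refine ⟨⟨by omega, by omega⟩, ?_⟩
        simp only [Finset.mem_insert, Finset.mem_singleton]
        push_neg
        refine ⟨fun h => haJ (h ▸ hx), by omega, by omega⟩
    · refine ⟨Finset.singleton_subset_iff.mpr (Finset.mem_Icc.mpr (by omega)), ?_⟩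
      rw [Finset.pair_comm] at hs
      exact hs
    · refine ⟨Finset.singleton_subset_iff.mpr (Finset.mem_Icc.mpr (by omega)), ?_⟩
      rw [Finset.pair_comm] at hs
      exact hs

end Helpers

/-- For type {1,n−2,n−1}: {1,n−2,n} is long, so if {n−2,n} is short
then {j,n−2,n} is long for all j ≥ 1; and the chamber (i.e. Ṡ(ℓ)) is completely
determined by the type together with the shortness of {n−1,n} and {n−2,n},
giving at most three chambers up to permutation. -/
theorem type_one_chambers (n : ℕ) (ℓ : ℕ → ℝ) (hn : 5 ≤ n)
    (hpos : LengthVec n ℓ) (hord : OrderedVec n ℓ) (hgen : Generic n ℓ)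
    (hspec : SpecialVec n ℓ) (hT : IsType n ℓ {1, n-2, n-1}) :
    Long n ℓ {1, n-2, n} ∧
    (Short n ℓ {n-2, n} → ∀ j : ℕ, 1 ≤ j → j ≤ n-3 → Long n ℓ {j, n-2, n}) ∧
    (Short n ℓ {n-1, n} → Short n ℓ {n-2, n}) ∧
    (∀ ℓ' : ℕ → ℝ, LengthVec n ℓ' → OrderedVec n ℓ' → Generic n ℓ' →
      SpecialVec n ℓ' → IsType n ℓ' {1, n-2, n-1} →
      (Short n ℓ {n-1, n} ↔ Short n ℓ' {n-1, n}) →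
      (Short n ℓ {n-2, n} ↔ Short n ℓ' {n-2, n}) →
      Sdot n ℓ = Sdot n ℓ') := by

  obtain ⟨hTsub, hTcard, hLT, hTmin⟩ := hT
  refine ⟨?_, ?_, ?_, ?_⟩
  · exact long_triple_ge n ℓ hn hord hLT (by omega) (by omega) (by omega) le_rfl
      (by omega) (by omega)
  · intro _ j hj1 hj3
    exact long_triple_ge n ℓ hn hord hLT hj1 le_rfl (by omega) le_rfl (by omega) (by omega)
  · intro hs
    have hsub1 : ({n-1, n} : Finset ℕ) ⊆ Finset.Icc 1 n := by
      simp only [Finset.insert_subset_iff, Finset.singleton_subset_iff, Finset.mem_Icc]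
      omega
    have hsub2 : ({n-2, n} : Finset ℕ) ⊆ Finset.Icc 1 n := by
      simp only [Finset.insert_subset_iff, Finset.singleton_subset_iff, Finset.mem_Icc]
      omega
    rw [short_iff' n ℓ hsub1, Finset.sum_pair (by omega : n-1 ≠ n)] at hs
    rw [short_iff' n ℓ hsub2, Finset.sum_pair (by omega : n-2 ≠ n)]
    have := hord (n-2) (n-1) (by omega) (by omega) (by omega)
    linarith
  · intro ℓ' hpos' hord' hgen' hspec' hT' hb1 hb2
    ext J
    rw [sdot_char n ℓ hn hpos hord hspec.1 hLT J,
        sdot_char n ℓ' hn hpos' hord' hspec'.1 hT'.2.2.1 J, hb1, hb2]
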